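/- Let k ≥ 1 and m ≥ 2 be integers and let E : [0,1) → [0,1) be an interval exchange transformation with m intervals belonging to A_k. Then E has more than k pairwise disjoint virtual orthogonal edges. -/
import Mathlib


open Set MeasureTheory Filter

/-- `IsIETm b m E` : `E` is an interval exchange transformation of `[0,b)` with `m` intervals:
`E` maps `[0,b)` bijectively onto itself, there are points
`0 = a 1 < a 2 < ⋯ < a m < a (m+1) = b` such that on each `[a i, a (i+1))` the map `E` is the
translation `x ↦ E (a i) + x - a i`, and `E` (as a map of `[0,b)`) is discontinuous exactly at
`a 2, …, a m`. -/
def IsIETm (b : ℝ) (m : ℕ) (E : ℝ → ℝ) : Prop :=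
  0 < b ∧ 1 ≤ m ∧ Set.BijOn E (Set.Ico 0 b) (Set.Ico 0 b) ∧
  ∃ a : ℕ → ℝ,
    a 1 = 0 ∧ a (m + 1) = b ∧
    (∀ i, 1 ≤ i → i ≤ m → a i < a (i + 1)) ∧
    (∀ i, 1 ≤ i → i ≤ m → ∀ x ∈ Set.Ico (a i) (a (i + 1)), E x = E (a i) + x - a i) ∧
    (∀ x ∈ Set.Ico (0 : ℝ) b,
      (¬ ContinuousWithinAt E (Set.Ico 0 b) x ↔ ∃ i, 2 ≤ i ∧ i ≤ m ∧ x = a i))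

/-- `E` is an interval exchange transformation of `[0,b)` (with some number of intervals). -/
def IsIET (b : ℝ) (E : ℝ → ℝ) : Prop := ∃ m, IsIETm b m E

/-- The closed interval `[s,t] ⊆ [0,b)` is a virtual orthogonal edge for the
iet `E : [0,b) → [0,b)` : the restriction of `E` to `[s,t]` is continuous and
`s < E s < E (E s) = t`. -/
def VirtOrthEdge (b : ℝ) (E : ℝ → ℝ) (s t : ℝ) : Prop :=
  0 ≤ s ∧ t < b ∧ ContinuousOn E (Set.Icc s t) ∧
  s < E s ∧ E s < E (E s) ∧ E (E s) = t

/-- `E : [0,b) → [0,b)` has at least `N` pairwise disjoint virtual orthogonal edges. -/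
def HasDisjointEdges (b : ℝ) (E : ℝ → ℝ) (N : ℕ) : Prop :=
  ∃ s t : Fin N → ℝ,
    (∀ i, VirtOrthEdge b E (s i) (t i)) ∧
    (∀ i j, i ≠ j → Disjoint (Set.Icc (s i) (t i)) (Set.Icc (s j) (t j)))

/-- The first-return time of `x` to `[0,b)` under `E` : the least `j ≥ 1` with `E^[j] x ∈ [0,b)`. -/
noncomputable def returnTime (E : ℝ → ℝ) (b x : ℝ) : ℕ :=
  sInf {j : ℕ | 1 ≤ j ∧ E^[j] x ∈ Set.Ico 0 b}

/-- The first-return map (induced map) of `E` on `[0,b)`. -/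
noncomputable def inducedMap (E : ℝ → ℝ) (b : ℝ) (x : ℝ) : ℝ :=
  E^[returnTime E b x] x

/-- `E` belongs to `ℬ k` : there is a sequence `bₙ → 0` in `(0,1)` such that for every `n`
the induced iet of `E` on `[0, bₙ)` has at least `k` pairwise disjoint virtual
orthogonal edges. -/
def MemBk (k : ℕ) (E : ℝ → ℝ) : Prop :=
  ∃ bseq : ℕ → ℝ,
    (∀ n, bseq n ∈ Set.Ioo (0 : ℝ) 1) ∧
    Filter.Tendsto bseq Filter.atTop (nhds 0) ∧
    ∀ n, HasDisjointEdges (bseq n) (inducedMap E (bseq n)) k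

/-- `E` belongs to `ℬ = ⋂_{k ≥ 1} ℬ k`. -/
def MemB (E : ℝ → ℝ) : Prop := ∀ k, 1 ≤ k → MemBk k E

/-- The left endpoint `a i = ∑_{j < i} λ j` of the `i`-th interval. -/
noncomputable def leftEndpoint (m : ℕ) (lam : Fin m → ℝ) (i : Fin m) : ℝ :=
  ∑ j ∈ Finset.univ.filter (fun j => j < i), lam j

/-- The left endpoint `∑_{π j < π i} λ j` of the image of the `i`-th interval. -/
noncomputable def imageLeftEndpoint (m : ℕ) (lam : Fin m → ℝ) (π : Equiv.Perm (Fin m))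
    (i : Fin m) : ℝ :=
  ∑ j ∈ Finset.univ.filter (fun j => π j < π i), lam j

open Classical in
/-- The interval exchange transformation associated with the pair `(λ, π)` : on the `i`-th
interval `[a i, a i + λ i)` it is the translation taking `a i` to `∑_{π j < π i} λ j`. -/
noncomputable def ietOf (m : ℕ) (lam : Fin m → ℝ) (π : Equiv.Perm (Fin m)) (x : ℝ) : ℝ :=
  x + ∑ i : Fin m,
    (if leftEndpoint m lam i ≤ x ∧ x < leftEndpoint m lam i + lam i
      then imageLeftEndpoint m lam π i - leftEndpoint m lam i else 0)

/-- The open simplex `Δ_m` of positive probability vectors in `ℝ^m`. -/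
def posSimplex (m : ℕ) : Set (Fin m → ℝ) :=
  {lam | (∀ i, 0 < lam i) ∧ ∑ i, lam i = 1}

/-- The parametrization of (a superset of) `Δ_m` by its first `m - 1` coordinates; the last
coordinate is `1` minus the sum of the others.  It identifies the set
`{v ∈ ℝ^{m-1} | ∀ i, v i > 0, ∑ v i < 1}`, carrying `(m-1)`-dimensional Lebesgue measure,
with `Δ_m`. -/
def completeVec (m : ℕ) (v : Fin (m - 1) → ℝ) : Fin m → ℝ :=
  fun i => if h : (i : ℕ) < m - 1 then v ⟨i, h⟩ else 1 - ∑ j, v j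

/-- `E` belongs to `A_k` : for some `a ∈ (16⁻ᵏ - 32⁻ᵏ, 16⁻ᵏ + 32⁻ᵏ)`, `E x = a + x`
for all `x ∈ [0, 1/2]`. -/
def MemAk (k : ℕ) (E : ℝ → ℝ) : Prop :=
  ∃ a ∈ Set.Ioo ((16 : ℝ)⁻¹ ^ k - (32 : ℝ)⁻¹ ^ k) ((16 : ℝ)⁻¹ ^ k + (32 : ℝ)⁻¹ ^ k),
    ∀ x ∈ Set.Icc (0 : ℝ) (1 / 2), E x = a + x

instance (n : ℕ) : MeasurableSpace (Equiv.Perm (Fin n)) := ⊤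

instance (n : ℕ) : MeasurableSingletonClass (Equiv.Perm (Fin n)) :=
  ⟨fun _ => MeasurableSpace.measurableSet_top⟩

instance (n : ℕ) : TopologicalSpace (Equiv.Perm (Fin n)) := ⊥

instance (n : ℕ) : DiscreteTopology (Equiv.Perm (Fin n)) := ⟨rfl⟩

lemma aux_nat_pow (k : ℕ) (hk : 1 ≤ k) : 9 * k + 6 ≤ 16 ^ k := by
  induction k with
  | zero => omega
  | succ n ih =>
    rcases Nat.eq_or_lt_of_le hk with h | h
    · simp [← h]
    · have hn : 1 ≤ n := by omega
      have h1 := ih hn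
      have h2 : 16 ≤ 16 ^ n := by
        calc 16 = 16 ^ 1 := by norm_num
        _ ≤ 16 ^ n := Nat.pow_le_pow_right (by norm_num) hn
      have h3 : 16 ^ (n + 1) = 16 * 16 ^ n := by ring
      omega

lemma aux_key (k : ℕ) (hk : 1 ≤ k) (a : ℝ)
    (ha : a < (16 : ℝ)⁻¹ ^ k + (32 : ℝ)⁻¹ ^ k) :
    a * (3 * k + 2) ≤ 1 / 2 := by
  have h16 : (0 : ℝ) < (16 : ℝ)⁻¹ ^ k := by positivity
  have h32 : (32 : ℝ)⁻¹ ^ k ≤ (1 / 2) * (16 : ℝ)⁻¹ ^ k := by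
    have he : (32 : ℝ)⁻¹ ^ k = (2 : ℝ)⁻¹ ^ k * (16 : ℝ)⁻¹ ^ k := by
      rw [← mul_pow]; norm_num
    rw [he]
    refine mul_le_mul_of_nonneg_right ?_ h16.le
    calc (2 : ℝ)⁻¹ ^ k ≤ (2 : ℝ)⁻¹ ^ 1 :=
        pow_le_pow_of_le_one (by norm_num) (by norm_num) hk
    _ = 1 / 2 := by norm_num
  have hnat := aux_nat_pow k hk
  have hnr : (9 * k + 6 : ℝ) ≤ 16 ^ k := by exact_mod_cast hnat
  have hinv : (16 : ℝ)⁻¹ ^ k * (16 : ℝ) ^ k = 1 := by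
    rw [← mul_pow]; norm_num
  have hkpos : (0 : ℝ) < 3 * k + 2 := by positivity
  have h16pos : (0 : ℝ) < (16 : ℝ) ^ k := by positivity
  nlinarith [mul_le_mul_of_nonneg_left hnr h16.le,
    mul_lt_mul_of_pos_right ha hkpos]

/-- If `k ≥ 1`, `m ≥ 2` and `E : [0,1) → [0,1)` is an interval exchange
transformation with `m` intervals belonging to `A_k`, then `E` has more than `k` pairwise
disjoint virtual orthogonal edges. -/
theorem edges_of_mem_Ak (k m : ℕ) (hk : 1 ≤ k) (hm : 2 ≤ m)
    (E : ℝ → ℝ) (hE : IsIETm 1 m E) (hA : MemAk k E) :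
    HasDisjointEdges 1 E (k + 1) := by
  obtain ⟨a, ⟨halo, hahi⟩, hf⟩ := hA
  have ha0 : 0 < a := by
    have : (32 : ℝ)⁻¹ ^ k < (16 : ℝ)⁻¹ ^ k :=
      pow_lt_pow_left₀ (by norm_num) (by norm_num) (by omega)
    linarith
  have hbound : a * (3 * k + 2) ≤ 1 / 2 := aux_key k hk a hahi
  refine ⟨fun i => 3 * a * i, fun i => 3 * a * i + 2 * a, ?_, ?_⟩
  · intro i
    show VirtOrthEdge 1 E (3 * a * i) (3 * a * i + 2 * a)
    have hik : (i : ℝ) ≤ k := by exact_mod_cast Nat.lt_succ_iff.mp i.isLt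
    have hti : 3 * a * i + 2 * a ≤ 1 / 2 := by nlinarith
    have hsi : (0 : ℝ) ≤ 3 * a * i := by positivity
    have hsub : Set.Icc (3 * a * i : ℝ) (3 * a * i + 2 * a) ⊆ Set.Icc 0 (1 / 2) :=
      Set.Icc_subset_Icc hsi hti
    have hEs : E (3 * a * i) = a + 3 * a * i :=
      hf _ ⟨hsi, by linarith⟩
    have hEEs : E (a + 3 * a * i) = a + (a + 3 * a * i) :=
      hf _ ⟨by linarith, by linarith⟩
    refine ⟨hsi, by linarith, ?_, ?_, ?_, ?_⟩
    · exact ((continuous_const.add continuous_id).continuousOn).congr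
        (fun x hx => hf x (hsub hx))
    · linarith [hEs]
    · rw [hEs, hEEs]; linarith
    · rw [hEs, hEEs]; ring
  · intro i j hij
    have key : ∀ p q : Fin (k + 1), p < q →
        Disjoint (Set.Icc (3 * a * p : ℝ) (3 * a * p + 2 * a))
          (Set.Icc (3 * a * q : ℝ) (3 * a * q + 2 * a)) := by
      intro p q hpq
      have hpq' : (p : ℝ) + 1 ≤ q := by exact_mod_cast Nat.succ_le_of_lt hpq
      apply Set.disjoint_left.mpr
      intro x hx1 hx2
      have h1 : x ≤ 3 * a * p + 2 * a := hx1.2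
      have h2 : 3 * a * q ≤ x := hx2.1
      nlinarith
    rcases lt_or_gt_of_ne hij with h | h
    · exact key i j h
    · exact (key j i h).symm
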